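/- Let ψ : X → ℝᵈ be a measurable closed-valued multifunction on a measurable space (X, G), and for ω ∈ X define ψ*(ω) = {H ∈ S^{d−1} : H·y ≥ 0 for all y ∈ ψ(ω)}, where S^{d−1} is the unit sphere in ℝᵈ. Then ψ* is a closed-valued G-measurable multifunction. -/

import Mathlib

open Metric Set Filter Topology

/-- Key lemma: hitting a compact set by the dominance cone is measurable. -/
lemma stmt8_compact {X : Type} [MeasurableSpace X] {d : ℕ}
    (ψ : X → Set (EuclideanSpace ℝ (Fin d)))
    (hmeas : ∀ O : Set (EuclideanSpace ℝ (Fin d)), IsOpen O →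
      MeasurableSet {ω | (ψ ω ∩ O).Nonempty})
    (K : Set (EuclideanSpace ℝ (Fin d))) (hK : IsCompact K) :
    MeasurableSet {ω | ({H | ∀ y ∈ ψ ω, 0 ≤ (inner ℝ H y : ℝ)} ∩ K).Nonempty} := by
  obtain ⟨D, hDK, hDc, hDd⟩ :=
    (TopologicalSpace.IsSeparable.of_separableSpace K).exists_countable_dense_subset
  set U : EuclideanSpace ℝ (Fin d) → ℕ → Set (EuclideanSpace ℝ (Fin d)) :=
    fun H n => {y | (inner ℝ H y : ℝ) < -(1 / ((n : ℝ) + 1)) * (1 + ‖y‖)} with hU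
  have hUopen : ∀ H n, IsOpen (U H n) := by
    intro H n
    exact isOpen_lt (Continuous.inner continuous_const continuous_id)
      (by fun_prop)
  have key : {ω | ({H | ∀ y ∈ ψ ω, 0 ≤ (inner ℝ H y : ℝ)} ∩ K).Nonempty}
      = ⋂ n : ℕ, ⋃ H ∈ D, {ω | (ψ ω ∩ U H n).Nonempty}ᶜ := by
    ext ω
    simp only [mem_iInter, mem_iUnion, mem_compl_iff, mem_setOf_eq]
    constructor
    · rintro ⟨H₀, hH₀, hH₀K⟩ n
      have hε : (0:ℝ) < 1 / ((n : ℝ) + 1) := by positivity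
      obtain ⟨H, hHD, hdist⟩ := Metric.mem_closure_iff.1 (hDd hH₀K) _ hε
      refine ⟨H, hHD, ?_⟩
      rintro ⟨y, hy, hyU⟩
      have h0 : (0:ℝ) ≤ inner ℝ H₀ y := hH₀ y hy
      have h1 : |(inner ℝ (H₀ - H) y : ℝ)| ≤ ‖H₀ - H‖ * ‖y‖ := abs_real_inner_le_norm _ _
      have h2 : (inner ℝ (H₀ - H) y : ℝ) = inner ℝ H₀ y - inner ℝ H y := inner_sub_left _ _ _
      have h3 : ‖H₀ - H‖ < 1 / ((n : ℝ) + 1) := by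
        rwa [dist_eq_norm] at hdist
      have h4 : (inner ℝ H y : ℝ) < -(1 / ((n : ℝ) + 1)) * (1 + ‖y‖) := hyU
      have h5 : (0:ℝ) ≤ ‖y‖ := norm_nonneg _
      have h6 := abs_le.1 h1
      nlinarith [h6.2]
    · intro h
      choose H hHD hH using h
      obtain ⟨a, haK, φ, hφ, hconv⟩ := hK.tendsto_subseq (fun n => hDK (hHD n))
      refine ⟨a, ?_, haK⟩
      intro y hy
      have hbound : ∀ n : ℕ, -(1 / ((n : ℝ) + 1)) * (1 + ‖y‖) ≤ (inner ℝ (H n) y : ℝ) := by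
        intro n
        by_contra hlt
        push_neg at hlt
        exact hH n ⟨y, hy, hlt⟩
      have h1 : Tendsto (fun k => (inner ℝ (H (φ k)) y : ℝ)) atTop (𝓝 (inner ℝ a y)) :=
        ((Continuous.inner continuous_id continuous_const).tendsto a).comp hconv
      have h2 : Tendsto (fun k => -(1 / ((φ k : ℝ) + 1)) * (1 + ‖y‖)) atTop (𝓝 0) := by
        have h3 : Tendsto (fun k => 1 / ((φ k : ℝ) + 1)) atTop (𝓝 0) :=
          tendsto_one_div_add_atTop_nhds_zero_nat.comp hφ.tendsto_atTop
        have := (h3.neg).mul_const (1 + ‖y‖)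
        simpa using this
      exact le_of_tendsto_of_tendsto' h2 h1 (fun k => hbound (φ k))
  rw [key]
  exact MeasurableSet.iInter fun n =>
    MeasurableSet.biUnion hDc fun H _ => (hmeas _ (hUopen H n)).compl

/-- Preservation of measurability (Rockafellar–Wets): the multifunction of unit-norm
separating directions `ψ*(ω) = {H ∈ S^{d-1} : H·y ≥ 0 ∀ y ∈ ψ(ω)}` of a measurable
closed-valued multifunction `ψ` is itself closed-valued and measurable. -/
theorem stmt8 {X : Type} [MeasurableSpace X] {d : ℕ}
    (ψ : X → Set (EuclideanSpace ℝ (Fin d)))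
    (hclosed : ∀ ω, IsClosed (ψ ω))
    (hmeas : ∀ O : Set (EuclideanSpace ℝ (Fin d)), IsOpen O →
      MeasurableSet {ω | (ψ ω ∩ O).Nonempty})
    (ψs : X → Set (EuclideanSpace ℝ (Fin d)))
    (hψs : ψs = fun ω => {H | ‖H‖ = 1 ∧ ∀ y ∈ ψ ω, 0 ≤ (inner ℝ H y : ℝ)}) :
    (∀ ω, IsClosed (ψs ω)) ∧
    ∀ O : Set (EuclideanSpace ℝ (Fin d)), IsOpen O →
      MeasurableSet {ω | (ψs ω ∩ O).Nonempty} := by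
  constructor
  · intro ω
    simp only [hψs]
    have heq : {H : EuclideanSpace ℝ (Fin d) | ‖H‖ = 1 ∧ ∀ y ∈ ψ ω, 0 ≤ (inner ℝ H y : ℝ)}
        = {H | ‖H‖ = 1} ∩ ⋂ y ∈ ψ ω, {H | 0 ≤ (inner ℝ H y : ℝ)} := by
      ext H
      simp [Set.mem_iInter]
    rw [heq]
    exact (isClosed_eq continuous_norm continuous_const).inter
      (isClosed_biInter fun y _ =>
        isClosed_le continuous_const (Continuous.inner continuous_id continuous_const))
  · intro O hO
    obtain ⟨D₀, hD₀c, hD₀d⟩ := TopologicalSpace.exists_countable_dense (EuclideanSpace ℝ (Fin d))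
    have key : {ω | (ψs ω ∩ O).Nonempty} =
        ⋃ q ∈ D₀, ⋃ r : ℚ, ⋃ (_ : 0 < (r : ℝ) ∧ closedBall q (r : ℝ) ⊆ O),
          {ω | ({H | ∀ y ∈ ψ ω, 0 ≤ (inner ℝ H y : ℝ)}
            ∩ (Metric.sphere (0 : EuclideanSpace ℝ (Fin d)) 1 ∩ closedBall q (r : ℝ))).Nonempty} := by
      ext ω
      simp only [mem_iUnion, mem_setOf_eq]
      constructor
      · rintro ⟨H, hHψs, hHO⟩
        rw [hψs] at hHψs
        obtain ⟨hnorm, hdom⟩ := hHψs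
        obtain ⟨ε, hε, hball⟩ := Metric.isOpen_iff.1 hO H hHO
        obtain ⟨r, hr0, hrε⟩ := exists_rat_btwn (by positivity : (0:ℝ) < ε / 2)
        obtain ⟨q, hqD₀, hqH⟩ := Metric.mem_closure_iff.1 (hD₀d H) _ hr0
        rw [dist_comm] at hqH
        have hsub : closedBall q (r : ℝ) ⊆ O := by
          intro z hz
          apply hball
          rw [Metric.mem_ball]
          calc dist z H ≤ dist z q + dist q H := dist_triangle _ _ _
            _ ≤ (r : ℝ) + (r : ℝ) := by
                have := Metric.mem_closedBall.1 hz
                linarith [hqH.le]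
            _ < ε := by linarith
        refine ⟨q, hqD₀, r, ⟨hr0, hsub⟩, H, hdom, ?_, ?_⟩
        · rwa [mem_sphere_zero_iff_norm]
        · rw [Metric.mem_closedBall, dist_comm]
          exact hqH.le
      · rintro ⟨q, _, r, ⟨_, hsub⟩, H, hdom, hsph, hball⟩
        refine ⟨H, ?_, hsub hball⟩
        rw [hψs]
        exact ⟨mem_sphere_zero_iff_norm.1 hsph, hdom⟩
    rw [key]
    exact MeasurableSet.biUnion hD₀c fun q _ =>
      MeasurableSet.iUnion fun r => MeasurableSet.iUnion fun _ =>
        stmt8_compact ψ hmeas _ ((isCompact_sphere 0 1).inter_right isClosed_closedBall)
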